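/- If the true varying coefficient β(u) is not affine on an interval I of positive measure and the covariance matrix of (X, uX) restricted to u ∈ I is positive definite, then the minimal population mean squared error of any single affine-in-u linear model on I strictly exceeds σ²: min_{a,b} E[(y − aᵀX − (bᵀX)u)² | u ∈ I] > σ². -/

import Mathlib

open MeasureTheory ProbabilityTheory Matrix

lemma aux_integrable_of_bdd {Ω : Type*} [MeasurableSpace Ω] {μ : Measure Ω} [IsFiniteMeasure μ]
    {f : Ω → ℝ} (hf : AEStronglyMeasurable f μ) {D : ℝ} (h : ∀ ω, |f ω| ≤ D) : Integrable f μ :=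
  (integrable_const D).mono' hf (Filter.Eventually.of_forall (by simpa using h))

lemma aux_quad_min {n : Type*} [Fintype n] [DecidableEq n]
    (M : Matrix n n ℝ) (hM : M.PosDef) (v : n → ℝ) (K : ℝ) (c : n → ℝ) :
    K - 2 * (v ⬝ᵥ (M⁻¹ *ᵥ v)) + (M⁻¹ *ᵥ v) ⬝ᵥ M *ᵥ (M⁻¹ *ᵥ v)
      ≤ K - 2 * (v ⬝ᵥ c) + c ⬝ᵥ M *ᵥ c := by
  set c₀ : n → ℝ := M⁻¹ *ᵥ v with hc₀
  have hMc₀ : M *ᵥ c₀ = v := by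
    rw [hc₀, Matrix.mulVec_mulVec, Matrix.mul_nonsing_inv _ hM.det_pos.ne'.isUnit, Matrix.one_mulVec]
  have hsym : ∀ x y : n → ℝ, x ⬝ᵥ M *ᵥ y = y ⬝ᵥ M *ᵥ x := by
    intro x y
    rw [Matrix.dotProduct_mulVec, ← Matrix.mulVec_transpose, dotProduct_comm]
    congr 1
    rw [show Mᵀ = M from hM.isHermitian]
  have hpos : 0 ≤ (c - c₀) ⬝ᵥ M *ᵥ (c - c₀) := by
    have := hM.posSemidef.dotProduct_mulVec_nonneg (c - c₀); simpa using this
  have hexp : (c - c₀) ⬝ᵥ M *ᵥ (c - c₀)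
      = c ⬝ᵥ M *ᵥ c - 2 * (v ⬝ᵥ c) + v ⬝ᵥ c₀ := by
    rw [Matrix.mulVec_sub, dotProduct_sub, sub_dotProduct, sub_dotProduct,
      hMc₀, hsym c₀ c, hMc₀]
    rw [dotProduct_comm c₀ v, dotProduct_comm c v]
    ring
  have hval : c₀ ⬝ᵥ M *ᵥ c₀ = v ⬝ᵥ c₀ := by rw [hMc₀, dotProduct_comm]
  nlinarith [hpos, hexp, hval]

lemma aux_block_posdef {n m : Type*} [Fintype n] [Fintype m]
    (M : Matrix (n ⊕ m) (n ⊕ m) ℝ) (hM : M.PosDef) :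
    (Matrix.of fun j k => M (Sum.inl j) (Sum.inl k) : Matrix n n ℝ).PosDef := by
  refine Matrix.PosDef.of_dotProduct_mulVec_pos ?_ ?_
  · ext j k
    have := congrFun (congrFun hM.isHermitian (Sum.inl j)) (Sum.inl k)
    simpa [Matrix.conjTranspose_apply] using this
  · intro x hx
    have hz : (Sum.elim x 0 : n ⊕ m → ℝ) ≠ 0 := by
      intro h
      apply hx
      funext j
      exact congrFun h (Sum.inl j)
    have := hM.dotProduct_mulVec_pos hz
    simp only [RCLike.star_def, star_trivial] at this ⊢
    convert this using 1
    simp [dotProduct, Matrix.mulVec, Fintype.sum_sum_type]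

/-- If the true varying coefficient `β` is not (conditionally a.e.) affine on an interval
`I` with `P(u ∈ I) > 0`, and the conditional second-moment matrix of `(X, uX)` given
`u ∈ I` is positive definite, then the minimal population mean squared error of any
affine-in-`u` linear fit, conditionally on `u ∈ I`, strictly exceeds `σ²`. -/
theorem population_mse_exceeds_noise {Ω : Type*} [MeasurableSpace Ω]
    (μ : Measure Ω) [IsProbabilityMeasure μ] (p : ℕ)
    (X : Ω → Fin p → ℝ) (u : Ω → ℝ) (ε : Ω → ℝ)
    (hX : Measurable X) (hu : Measurable u) (hε : Measurable ε)
    (C : ℝ) (hbdd : ∀ ω, |u ω| ≤ C ∧ ∀ j, |X ω j| ≤ C)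
    (hεL2 : MemLp ε 2 μ)
    (hindep : IndepFun ε (fun ω => (X ω, u ω)) μ)
    (hXu : IndepFun X u μ)
    (hmean : ∫ ω, ε ω ∂μ = 0) (σ2 : ℝ) (hvar : ∫ ω, (ε ω) ^ 2 ∂μ = σ2)
    (β : ℝ → Fin p → ℝ) (hβ : Continuous β)
    (y : Ω → ℝ) (hy : ∀ ω, y ω = ∑ j, β (u ω) j * X ω j + ε ω)
    (I : Set ℝ) (hI : ∃ c d : ℝ, c < d ∧ I = Set.Icc c d ∧ 0 ≤ c ∧ d ≤ 1)
    (hpos : 0 < μ (u ⁻¹' I))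
    (hnotaff : ∀ a b : Fin p → ℝ,
      ¬ (∀ᵐ ω ∂(ProbabilityTheory.cond μ (u ⁻¹' I)),
        ∀ j, β (u ω) j = a j + b j * u ω))
    (M : Matrix (Fin p ⊕ Fin p) (Fin p ⊕ Fin p) ℝ)
    (hM : ∀ j k, M j k = ∫ ω,
      (Sum.elim (fun j' => X ω j') (fun j' => u ω * X ω j') j) *
      (Sum.elim (fun k' => X ω k') (fun k' => u ω * X ω k') k)
        ∂(ProbabilityTheory.cond μ (u ⁻¹' I)))
    (hMpd : M.PosDef) :
    σ2 < ⨅ ab : (Fin p → ℝ) × (Fin p → ℝ),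
      ∫ ω, (y ω - ∑ j, ab.1 j * X ω j - (∑ j, ab.2 j * X ω j) * u ω) ^ 2
        ∂(ProbabilityTheory.cond μ (u ⁻¹' I)) := by
  obtain ⟨c0, d0, hcd, hIeq, hc00, hd0⟩ := hI
  have hImeas : MeasurableSet I := by rw [hIeq]; exact measurableSet_Icc
  set s : Set Ω := u ⁻¹' I with hsdef
  have hsmeas : MeasurableSet s := hu hImeas
  have hP0 : μ s ≠ 0 := hpos.ne'
  set ν : Measure Ω := ProbabilityTheory.cond μ s with hνdef
  haveI hνprob : IsProbabilityMeasure ν := cond_isProbabilityMeasure hP0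
  set P : ℝ := (μ s).toReal with hPdef
  have hPpos : 0 < P := ENNReal.toReal_pos hP0 (measure_ne_top μ s)
  -- conditional integral formula
  have hint_cond : ∀ f : Ω → ℝ, ∫ ω, f ω ∂ν = P⁻¹ * ∫ ω, s.indicator f ω ∂μ := by
    intro f
    rw [hνdef, ProbabilityTheory.cond, integral_smul_measure, ← integral_indicator hsmeas]
    simp [ENNReal.toReal_inv, smul_eq_mul, hPdef]
  have hint_ν : ∀ {f : Ω → ℝ}, Integrable f μ → Integrable f ν := by
    intro f hf
    rw [hνdef, ProbabilityTheory.cond]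
    exact (hf.restrict).smul_measure (ENNReal.inv_ne_top.2 hP0)
  -- nonemptiness and bounds
  have hΩne : Nonempty Ω := by
    by_contra h
    rw [not_nonempty_iff] at h
    have h1 := measure_univ (μ := μ)
    rw [Set.univ_eq_empty_iff.2 h] at h1
    simp at h1
  have hC0 : 0 ≤ C := le_trans (abs_nonneg _) (hbdd (Classical.arbitrary Ω)).1
  obtain ⟨D, hD⟩ : ∃ D, ∀ t ∈ Set.Icc (-C) C, ‖β t‖ ≤ D :=
    isCompact_Icc.exists_bound_of_continuousOn hβ.continuousOn
  have hD0 : 0 ≤ D := le_trans (norm_nonneg _) (hD 0 ⟨neg_nonpos.2 hC0, hC0⟩)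
  have humem : ∀ ω, u ω ∈ Set.Icc (-C) C := fun ω => Set.mem_Icc.2 (abs_le.1 (hbdd ω).1)
  have hβb : ∀ ω j, |β (u ω) j| ≤ D := by
    intro ω j
    calc |β (u ω) j| ≤ ‖β (u ω)‖ := by
          simpa [Real.norm_eq_abs] using norm_le_pi_norm (β (u ω)) j
      _ ≤ D := hD _ (humem ω)
  -- the regressor functions
  set Z : (Fin p ⊕ Fin p) → Ω → ℝ :=
    fun j ω => Sum.elim (fun j' => X ω j') (fun j' => u ω * X ω j') j with hZdef
  set f0 : Ω → ℝ := fun ω => ∑ j, β (u ω) j * X ω j with hf0def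
  have hZmeas : ∀ j, Measurable (Z j) := by
    rintro (j | j)
    · exact (measurable_pi_apply j).comp hX
    · exact hu.mul ((measurable_pi_apply j).comp hX)
  set BZ : ℝ := C + C * C with hBZdef
  have hBZ0 : 0 ≤ BZ := by nlinarith
  have hZb : ∀ j ω, |Z j ω| ≤ BZ := by
    rintro (j | j) ω
    · have := (hbdd ω).2 j; simp only [hZdef, Sum.elim_inl]; nlinarith
    · have h1 := (hbdd ω).2 j
      have h2 := (hbdd ω).1
      simp only [hZdef, Sum.elim_inr, abs_mul]
      nlinarith [abs_nonneg (u ω), abs_nonneg (X ω j)]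
  have hf0meas : Measurable f0 := by
    apply Finset.measurable_sum
    intro j _
    exact (((continuous_apply j).comp hβ).measurable.comp hu).mul ((measurable_pi_apply j).comp hX)
  set Bf : ℝ := p * (D * C) with hBfdef
  have hf0b : ∀ ω, |f0 ω| ≤ Bf := by
    intro ω
    calc |f0 ω| ≤ ∑ j, |β (u ω) j * X ω j| := Finset.abs_sum_le_sum_abs _ _
      _ ≤ ∑ _j : Fin p, D * C := by
          apply Finset.sum_le_sum
          intro j _
          rw [abs_mul]
          exact mul_le_mul (hβb ω j) ((hbdd ω).2 j) (abs_nonneg _) hD0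
      _ = Bf := by simp [hBfdef, mul_comm]
  have hBf0 : 0 ≤ Bf := le_trans (abs_nonneg _) (hf0b (Classical.arbitrary Ω))
  -- split sums over the sum type
  have hsum_split : ∀ (w : (Fin p ⊕ Fin p) → ℝ) ω,
      ∑ j, w j * Z j ω
        = (∑ j, w (Sum.inl j) * X ω j) + (∑ j, w (Sum.inr j) * X ω j) * u ω := by
    intro w ω
    rw [Fintype.sum_sum_type, Finset.sum_mul]
    congr 1 <;>
      exact Finset.sum_congr rfl fun j _ => by
        simp only [hZdef, Sum.elim_inl, Sum.elim_inr]; ring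
  -- pointwise squared residual expansion
  have hsq_exp : ∀ (w : (Fin p ⊕ Fin p) → ℝ) ω,
      (f0 ω - ∑ j, w j * Z j ω) ^ 2
        = f0 ω ^ 2 - 2 * (∑ j, w j * (f0 ω * Z j ω))
          + ∑ j, ∑ k, (w j * w k) * (Z j ω * Z k ω) := by
    intro w ω
    have h1 : f0 ω * ∑ j, w j * Z j ω = ∑ j, w j * (f0 ω * Z j ω) := by
      rw [Finset.mul_sum]
      exact Finset.sum_congr rfl fun j _ => by ring
    have h2 : (∑ j, w j * Z j ω) ^ 2 = ∑ j, ∑ k, (w j * w k) * (Z j ω * Z k ω) := by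
      rw [sq, Finset.sum_mul_sum]
      exact Finset.sum_congr rfl fun j _ => Finset.sum_congr rfl fun k _ => by ring
    calc (f0 ω - ∑ j, w j * Z j ω) ^ 2
        = f0 ω ^ 2 - 2 * (f0 ω * ∑ j, w j * Z j ω) + (∑ j, w j * Z j ω) ^ 2 := by ring
      _ = _ := by rw [h1, h2]
  -- integrability wrt ν of all the bounded pieces
  have hf0Zint : ∀ j, Integrable (fun ω => f0 ω * Z j ω) ν := by
    intro j
    exact aux_integrable_of_bdd ((hf0meas.mul (hZmeas j)).aestronglyMeasurable)
      (D := Bf * BZ) fun ω => by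
        rw [abs_mul]
        exact mul_le_mul (hf0b ω) (hZb j ω) (abs_nonneg _) hBf0
  have hZZint : ∀ j k, Integrable (fun ω => Z j ω * Z k ω) ν := by
    intro j k
    exact aux_integrable_of_bdd (((hZmeas j).mul (hZmeas k)).aestronglyMeasurable)
      (D := BZ * BZ) fun ω => by
        rw [abs_mul]
        exact mul_le_mul (hZb j ω) (hZb k ω) (abs_nonneg _) hBZ0
  have hf0sqint : Integrable (fun ω => f0 ω ^ 2) ν := by
    exact aux_integrable_of_bdd ((hf0meas.pow_const 2).aestronglyMeasurable)
      (D := Bf * Bf) fun ω => by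
        rw [sq, abs_mul]
        exact mul_le_mul (hf0b ω) (hf0b ω) (abs_nonneg _) hBf0
  -- the quadratic form
  set v : (Fin p ⊕ Fin p) → ℝ := fun j => ∫ ω, f0 ω * Z j ω ∂ν with hvdef
  set K : ℝ := ∫ ω, f0 ω ^ 2 ∂ν with hKdef
  set Q : ((Fin p ⊕ Fin p) → ℝ) → ℝ :=
    fun w => K - 2 * (v ⬝ᵥ w) + w ⬝ᵥ M *ᵥ w with hQdef
  -- step A1: the integral of the squared systematic residual is Q
  have hA1 : ∀ w : (Fin p ⊕ Fin p) → ℝ,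
      ∫ ω, (f0 ω - ∑ j, w j * Z j ω) ^ 2 ∂ν = Q w := by
    intro w
    have hint1 : Integrable (fun ω => ∑ j, w j * (f0 ω * Z j ω)) ν :=
      integrable_finset_sum _ fun j _ => ((hf0Zint j).const_mul (w j))
    have hint2 : Integrable (fun ω => ∑ j, ∑ k, (w j * w k) * (Z j ω * Z k ω)) ν :=
      integrable_finset_sum _ fun j _ =>
        integrable_finset_sum _ fun k _ => ((hZZint j k).const_mul _)
    have e1 : ∫ ω, (f0 ω ^ 2 - 2 * (∑ j, w j * (f0 ω * Z j ω))
          + ∑ j, ∑ k, (w j * w k) * (Z j ω * Z k ω)) ∂ν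
        = (∫ ω, f0 ω ^ 2 ∂ν) - 2 * (∫ ω, ∑ j, w j * (f0 ω * Z j ω) ∂ν)
          + ∫ ω, ∑ j, ∑ k, (w j * w k) * (Z j ω * Z k ω) ∂ν := by
      have hintsub : Integrable
          (fun ω => f0 ω ^ 2 - 2 * (∑ j, w j * (f0 ω * Z j ω))) ν :=
        hf0sqint.sub (hint1.const_mul 2)
      rw [integral_add hintsub hint2, integral_sub hf0sqint (hint1.const_mul 2),
        integral_const_mul]
    have e2 : ∫ ω, ∑ j, w j * (f0 ω * Z j ω) ∂ν = ∑ j, w j * v j := by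
      rw [integral_finset_sum _ fun j _ => (hf0Zint j).const_mul (w j)]
      exact Finset.sum_congr rfl fun j _ => integral_const_mul _ _
    have e3 : ∫ ω, ∑ j, ∑ k, (w j * w k) * (Z j ω * Z k ω) ∂ν
        = ∑ j, ∑ k, (w j * w k) * M j k := by
      rw [integral_finset_sum _ fun j _ =>
        (integrable_finset_sum _ fun k _ => ((hZZint j k).const_mul _))]
      refine Finset.sum_congr rfl fun j _ => ?_
      rw [integral_finset_sum _ fun k _ => ((hZZint j k).const_mul _)]
      refine Finset.sum_congr rfl fun k _ => ?_
      rw [integral_const_mul, hM j k]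
    have hvw : ∑ j, w j * v j = v ⬝ᵥ w := by
      rw [dotProduct]
      exact Finset.sum_congr rfl fun j _ => mul_comm _ _
    have hMw : ∑ j, ∑ k, (w j * w k) * M j k = w ⬝ᵥ M *ᵥ w := by
      simp only [dotProduct, Matrix.mulVec]
      refine Finset.sum_congr rfl fun j _ => ?_
      rw [Finset.mul_sum]
      exact Finset.sum_congr rfl fun k _ => by ring
    calc ∫ ω, (f0 ω - ∑ j, w j * Z j ω) ^ 2 ∂ν
        = ∫ ω, (f0 ω ^ 2 - 2 * (∑ j, w j * (f0 ω * Z j ω))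
            + ∑ j, ∑ k, (w j * w k) * (Z j ω * Z k ω)) ∂ν :=
          integral_congr_ae (Filter.Eventually.of_forall fun ω => hsq_exp w ω)
      _ = K - 2 * (∑ j, w j * v j) + ∑ j, ∑ k, (w j * w k) * M j k := by
          rw [e1, e2, e3, hKdef]
      _ = Q w := by rw [hvw, hMw, hQdef]
  -- indicator as a multiplication
  have hind_mul : ∀ (f : Ω → ℝ),
      s.indicator f = fun ω => f ω * Set.indicator I (fun _ => (1:ℝ)) (u ω) := by
    intro f
    funext ω
    by_cases h : u ω ∈ I
    · have hω : ω ∈ s := h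
      simp [Set.indicator_of_mem hω, Set.indicator_of_mem h]
    · have hω : ω ∉ s := h
      simp [Set.indicator_of_notMem hω, Set.indicator_of_notMem h]
  have hind1 : ∫ ω, Set.indicator I (fun _ => (1:ℝ)) (u ω) ∂μ = P := by
    have h1 : (fun ω => Set.indicator I (fun _ => (1:ℝ)) (u ω))
        = s.indicator (fun _ => (1:ℝ)) := by
      funext ω
      by_cases h : u ω ∈ I
      · have hω : ω ∈ s := h
        simp [Set.indicator_of_mem hω, Set.indicator_of_mem h]
      · have hω : ω ∉ s := h
        simp [Set.indicator_of_notMem hω, Set.indicator_of_notMem h]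
    rw [h1, integral_indicator_const _ hsmeas]
    simp [hPdef, Measure.real]
  -- step A3: conditional second moment of the noise
  have hA3 : ∫ ω, ε ω ^ 2 ∂ν = σ2 := by
    have h2 : ∫ ω, ε ω ^ 2 * Set.indicator I (fun _ => (1:ℝ)) (u ω) ∂μ
        = (∫ ω, ε ω ^ 2 ∂μ) * ∫ ω, Set.indicator I (fun _ => (1:ℝ)) (u ω) ∂μ :=
      IndepFun.integral_mul_eq_mul_integral
        (hindep.comp (measurable_id.pow_const 2)
          ((measurable_const.indicator hImeas).comp measurable_snd))
        ((hε.pow_const 2).aestronglyMeasurable)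
        (((measurable_const.indicator hImeas).comp hu).aestronglyMeasurable)
    rw [hint_cond, hind_mul]
    rw [h2, hvar, hind1]
    field_simp
  -- step A2: conditional orthogonality of noise and systematic residual
  have hA2 : ∀ w : (Fin p ⊕ Fin p) → ℝ,
      ∫ ω, (f0 ω - ∑ j, w j * Z j ω) * ε ω ∂ν = 0 := by
    intro w
    set φw : (Fin p → ℝ) × ℝ → ℝ := fun q =>
      (∑ j, β q.2 j * q.1 j
        - ∑ j, w j * Sum.elim (fun j' => q.1 j') (fun j' => q.2 * q.1 j') j)
      * Set.indicator I (fun _ => (1:ℝ)) q.2 with hφwdef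
    have hφ : Measurable φw := by
      apply Measurable.mul
      · apply Measurable.sub
        · exact Finset.measurable_sum _ fun j _ =>
            (((continuous_apply j).comp (hβ.comp continuous_snd)).measurable).mul
              ((measurable_pi_apply j).comp measurable_fst)
        · refine Finset.measurable_sum _ fun j _ => ?_
          rcases j with j | j
          · simp only [Sum.elim_inl]
            exact measurable_const.mul ((measurable_pi_apply j).comp measurable_fst)
          · simp only [Sum.elim_inr]
            exact measurable_const.mul
              (measurable_snd.mul ((measurable_pi_apply j).comp measurable_fst))
      · exact (measurable_const.indicator hImeas).comp measurable_snd
    have h2 : ∫ ω, ε ω * φw (X ω, u ω) ∂μ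
        = (∫ ω, ε ω ∂μ) * ∫ ω, φw (X ω, u ω) ∂μ :=
      IndepFun.integral_mul_eq_mul_integral (hindep.comp measurable_id hφ)
        hε.aestronglyMeasurable
        ((hφ.comp (hX.prodMk hu)).aestronglyMeasurable)
    have hpt : ∀ ω, s.indicator (fun ω => (f0 ω - ∑ j, w j * Z j ω) * ε ω) ω
        = ε ω * φw (X ω, u ω) := by
      intro ω
      rw [hind_mul]
      show (f0 ω - ∑ j, w j * Z j ω) * ε ω * Set.indicator I (fun _ => (1:ℝ)) (u ω)
        = ε ω * ((f0 ω - ∑ j, w j * Z j ω) * Set.indicator I (fun _ => (1:ℝ)) (u ω))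
      ring
    rw [hint_cond, integral_congr_ae (Filter.Eventually.of_forall hpt), h2, hmean]
    ring
  -- integrability of residual pieces
  have hgmeas : ∀ w : (Fin p ⊕ Fin p) → ℝ,
      Measurable (fun ω => f0 ω - ∑ j, w j * Z j ω) := fun w =>
    hf0meas.sub (Finset.measurable_sum _ fun j _ => measurable_const.mul (hZmeas j))
  have hgb : ∀ (w : (Fin p ⊕ Fin p) → ℝ) ω,
      |f0 ω - ∑ j, w j * Z j ω| ≤ Bf + (∑ j, |w j|) * BZ := by
    intro w ω
    calc |f0 ω - ∑ j, w j * Z j ω| ≤ |f0 ω| + |∑ j, w j * Z j ω| := abs_sub _ _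
      _ ≤ Bf + (∑ j, |w j|) * BZ := by
          gcongr
          · exact hf0b ω
          · calc |∑ j, w j * Z j ω| ≤ ∑ j, |w j * Z j ω| := Finset.abs_sum_le_sum_abs _ _
              _ ≤ ∑ j, |w j| * BZ := by
                  apply Finset.sum_le_sum
                  intro j _
                  rw [abs_mul]
                  exact mul_le_mul_of_nonneg_left (hZb j ω) (abs_nonneg _)
              _ = (∑ j, |w j|) * BZ := by rw [Finset.sum_mul]
  have hgsqint : ∀ w : (Fin p ⊕ Fin p) → ℝ,
      Integrable (fun ω => (f0 ω - ∑ j, w j * Z j ω) ^ 2) ν := by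
    intro w
    exact aux_integrable_of_bdd (((hgmeas w).pow_const 2).aestronglyMeasurable)
      (D := (Bf + (∑ j, |w j|) * BZ) ^ 2) fun ω => by
        rw [abs_pow]
        exact pow_le_pow_left₀ (abs_nonneg _) (hgb w ω) 2
  have hεint_ν : Integrable ε ν := hint_ν (hεL2.integrable one_le_two)
  have hεsqint_ν : Integrable (fun ω => ε ω ^ 2) ν := hint_ν hεL2.integrable_sq
  have hgεint : ∀ w : (Fin p ⊕ Fin p) → ℝ,
      Integrable (fun ω => (f0 ω - ∑ j, w j * Z j ω) * ε ω) ν := by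
    intro w
    have hb : Integrable (fun ω => (Bf + (∑ j, |w j|) * BZ) * |ε ω|) ν :=
      hεint_ν.abs.const_mul _
    refine hb.mono' (((hgmeas w).mul hε).aestronglyMeasurable)
      (Filter.Eventually.of_forall fun ω => ?_)
    rw [Real.norm_eq_abs, abs_mul]
    exact mul_le_mul_of_nonneg_right (hgb w ω) (abs_nonneg _)
  -- the master MSE identity
  have hMSE : ∀ ab : (Fin p → ℝ) × (Fin p → ℝ),
      ∫ ω, (y ω - ∑ j, ab.1 j * X ω j - (∑ j, ab.2 j * X ω j) * u ω) ^ 2 ∂ν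
        = σ2 + Q (Sum.elim ab.1 ab.2) := by
    intro ab
    set w : (Fin p ⊕ Fin p) → ℝ := Sum.elim ab.1 ab.2 with hwdef
    have hpt : ∀ ω, y ω - ∑ j, ab.1 j * X ω j - (∑ j, ab.2 j * X ω j) * u ω
        = (f0 ω - ∑ j, w j * Z j ω) + ε ω := by
      intro ω
      have hsp : (∑ j, ab.1 j * X ω j) + (∑ j, ab.2 j * X ω j) * u ω
          = ∑ j, w j * Z j ω := by
        rw [hsum_split w ω, hwdef]
        simp only [Sum.elim_inl, Sum.elim_inr]
      have hf0ω : f0 ω = ∑ j, β (u ω) j * X ω j := rfl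
      rw [hy ω, ← hsp, hf0ω]
      ring
    have hint2a : Integrable (fun ω => 2 * ((f0 ω - ∑ j, w j * Z j ω) * ε ω)) ν :=
      (hgεint w).const_mul 2
    calc ∫ ω, (y ω - ∑ j, ab.1 j * X ω j - (∑ j, ab.2 j * X ω j) * u ω) ^ 2 ∂ν
        = ∫ ω, ((f0 ω - ∑ j, w j * Z j ω) ^ 2
            + (2 * ((f0 ω - ∑ j, w j * Z j ω) * ε ω) + ε ω ^ 2)) ∂ν := by
          refine integral_congr_ae (Filter.Eventually.of_forall fun ω => ?_)
          show (y ω - ∑ j, ab.1 j * X ω j - (∑ j, ab.2 j * X ω j) * u ω) ^ 2 = _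
          rw [hpt ω]
          ring
      _ = (∫ ω, (f0 ω - ∑ j, w j * Z j ω) ^ 2 ∂ν)
          + ((∫ ω, 2 * ((f0 ω - ∑ j, w j * Z j ω) * ε ω) ∂ν) + ∫ ω, ε ω ^ 2 ∂ν) := by
          have hadd1 : Integrable
              (fun ω => 2 * ((f0 ω - ∑ j, w j * Z j ω) * ε ω) + ε ω ^ 2) ν :=
            hint2a.add hεsqint_ν
          rw [integral_add (hgsqint w) hadd1, integral_add hint2a hεsqint_ν]
      _ = Q w + (2 * 0 + σ2) := by
          rw [hA1 w, hA3, integral_const_mul, hA2 w]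
      _ = σ2 + Q w := by ring
  -- minimize the quadratic form
  set wstar : (Fin p ⊕ Fin p) → ℝ := M⁻¹ *ᵥ v with hwstar
  have hQmin : ∀ w : (Fin p ⊕ Fin p) → ℝ, Q wstar ≤ Q w := by
    intro w
    rw [hQdef, hwstar]
    exact aux_quad_min M hMpd v K w
  have hQstar_pos : 0 < Q wstar := by
    have hQint : ∫ ω, (f0 ω - ∑ j, wstar j * Z j ω) ^ 2 ∂ν = Q wstar := hA1 wstar
    have hnn : 0 ≤ ∫ ω, (f0 ω - ∑ j, wstar j * Z j ω) ^ 2 ∂ν :=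
      integral_nonneg fun ω => sq_nonneg _
    rcases lt_or_eq_of_le hnn with hlt | heq
    · rwa [hQint] at hlt
    exfalso
    -- the systematic residual vanishes in L², contradicting non-affineness
    set δf : ℝ → Fin p → ℝ :=
      fun t j => β t j - wstar (Sum.inl j) - wstar (Sum.inr j) * t with hδdef
    have hδcont : Continuous δf := by
      apply continuous_pi
      intro j
      exact (((continuous_apply j).comp hβ).sub continuous_const).sub
        (continuous_const.mul continuous_id)
    obtain ⟨E, hE⟩ : ∃ E, ∀ t ∈ Set.Icc (-C) C, ‖δf t‖ ≤ E :=
      isCompact_Icc.exists_bound_of_continuousOn hδcont.continuousOn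
    have hδb : ∀ ω j, |δf (u ω) j| ≤ E := by
      intro ω j
      calc |δf (u ω) j| ≤ ‖δf (u ω)‖ := by
            simpa [Real.norm_eq_abs] using norm_le_pi_norm (δf (u ω)) j
        _ ≤ E := hE _ (humem ω)
    have hE0 : 0 ≤ E := le_trans (norm_nonneg _) (hE 0 ⟨neg_nonpos.2 hC0, hC0⟩)
    have hδmeas : ∀ j, Measurable fun ω => δf (u ω) j := fun j =>
      ((continuous_apply j).comp hδcont).measurable.comp hu
    have hgδ : ∀ ω, f0 ω - ∑ j, wstar j * Z j ω = ∑ j, δf (u ω) j * X ω j := by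
      intro ω
      rw [hsum_split wstar ω]
      have hf0ω : f0 ω = ∑ j, β (u ω) j * X ω j := rfl
      have hrhs : ∑ j, δf (u ω) j * X ω j
          = (∑ j, β (u ω) j * X ω j) - (∑ j, wstar (Sum.inl j) * X ω j)
            - (∑ j, wstar (Sum.inr j) * X ω j) * u ω := by
        rw [Finset.sum_mul, ← Finset.sum_sub_distrib, ← Finset.sum_sub_distrib]
        refine Finset.sum_congr rfl fun j _ => ?_
        simp only [hδdef]
        ring
      rw [hf0ω, hrhs]
      ring
    -- the reduced second-moment matrix of X
    set S : Matrix (Fin p) (Fin p) ℝ :=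
      Matrix.of fun j k => M (Sum.inl j) (Sum.inl k) with hSdef
    have hSpd : S.PosDef := aux_block_posdef M hMpd
    have hSval : ∀ j k, S j k = ∫ ω, X ω j * X ω k ∂ν := by
      intro j k
      have := hM (Sum.inl j) (Sum.inl k)
      simpa [hSdef] using this
    -- factorization of the mixed moments using independence of X and u
    have hδδint : ∀ j k, Integrable (fun ω => δf (u ω) j * δf (u ω) k) ν := by
      intro j k
      exact aux_integrable_of_bdd (((hδmeas j).mul (hδmeas k)).aestronglyMeasurable)
        (D := E * E) fun ω => by
          rw [abs_mul]
          exact mul_le_mul (hδb ω j) (hδb ω k) (abs_nonneg _) hE0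
    have hδδXXint : ∀ j k,
        Integrable (fun ω => (δf (u ω) j * δf (u ω) k) * (X ω j * X ω k)) ν := by
      intro j k
      refine aux_integrable_of_bdd
        ((((hδmeas j).mul (hδmeas k)).mul
          (((measurable_pi_apply j).comp hX).mul
            ((measurable_pi_apply k).comp hX))).aestronglyMeasurable)
        (D := (E * E) * (C * C)) fun ω => ?_
      rw [abs_mul]
      refine mul_le_mul ?_ ?_ (abs_nonneg _) (by positivity)
      · rw [abs_mul]
        exact mul_le_mul (hδb ω j) (hδb ω k) (abs_nonneg _) hE0
      · rw [abs_mul]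
        exact mul_le_mul ((hbdd ω).2 j) ((hbdd ω).2 k) (abs_nonneg _) hC0
    have hfact : ∀ j k : Fin p,
        ∫ ω, (δf (u ω) j * δf (u ω) k) * (X ω j * X ω k) ∂ν
          = S j k * ∫ ω, δf (u ω) j * δf (u ω) k ∂ν := by
      intro j k
      set φ : (Fin p → ℝ) → ℝ := fun x => x j * x k with hφdef2
      have hφm : Measurable φ := (measurable_pi_apply j).mul (measurable_pi_apply k)
      set h1 : ℝ → ℝ := fun t =>
        (δf t j * δf t k) * Set.indicator I (fun _ => (1:ℝ)) t with hh1def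
      have hh1m : Measurable h1 :=
        ((((continuous_apply j).comp hδcont).mul
          ((continuous_apply k).comp hδcont)).measurable).mul
          (measurable_const.indicator hImeas)
      have hindφ1 : ∫ ω, φ (X ω) * h1 (u ω) ∂μ
          = (∫ ω, φ (X ω) ∂μ) * ∫ ω, h1 (u ω) ∂μ :=
        IndepFun.integral_mul_eq_mul_integral (hXu.comp hφm hh1m)
          (hφm.comp hX).aestronglyMeasurable (hh1m.comp hu).aestronglyMeasurable
      have hindφ2 : ∫ ω, φ (X ω) * Set.indicator I (fun _ => (1:ℝ)) (u ω) ∂μ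
          = (∫ ω, φ (X ω) ∂μ) * ∫ ω, Set.indicator I (fun _ => (1:ℝ)) (u ω) ∂μ :=
        IndepFun.integral_mul_eq_mul_integral (hXu.comp hφm (measurable_const.indicator hImeas))
          (hφm.comp hX).aestronglyMeasurable
          (((measurable_const.indicator hImeas).comp hu).aestronglyMeasurable)
      have hXX : ∫ ω, X ω j * X ω k ∂ν = ∫ ω, φ (X ω) ∂μ := by
        rw [hint_cond, hind_mul]
        rw [show (fun ω => X ω j * X ω k * Set.indicator I (fun _ => (1:ℝ)) (u ω))
            = fun ω => φ (X ω) * Set.indicator I (fun _ => (1:ℝ)) (u ω) from rfl]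
        rw [hindφ2, hind1, mul_comm (∫ ω, φ (X ω) ∂μ) P, ← mul_assoc,
          inv_mul_cancel₀ hPpos.ne', one_mul]
      have hh1int : ∫ ω, h1 (u ω) ∂μ
          = P * ∫ ω, δf (u ω) j * δf (u ω) k ∂ν := by
        rw [hint_cond (fun ω => δf (u ω) j * δf (u ω) k), hind_mul]
        rw [show (fun ω => h1 (u ω))
            = fun ω => (δf (u ω) j * δf (u ω) k)
                * Set.indicator I (fun _ => (1:ℝ)) (u ω) from rfl]
        rw [← mul_assoc, mul_inv_cancel₀ hPpos.ne', one_mul]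
      rw [hint_cond, hind_mul]
      rw [show (fun ω => (δf (u ω) j * δf (u ω) k) * (X ω j * X ω k)
            * Set.indicator I (fun _ => (1:ℝ)) (u ω))
          = fun ω => φ (X ω) * h1 (u ω) from funext fun ω => by
            show (δf (u ω) j * δf (u ω) k) * (X ω j * X ω k)
                * Set.indicator I (fun _ => (1:ℝ)) (u ω)
              = X ω j * X ω k
                * ((δf (u ω) j * δf (u ω) k) * Set.indicator I (fun _ => (1:ℝ)) (u ω))
            ring]
      rw [hindφ1, hh1int, hSval j k, hXX]
      have hPP : P⁻¹ * P = 1 := inv_mul_cancel₀ hPpos.ne'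
      linear_combination ((∫ ω, φ (X ω) ∂μ) * ∫ ω, δf (u ω) j * δf (u ω) k ∂ν) * hPP
    -- rewrite the vanishing integral as the integral of a quadratic form in δf
    have hsum1 : ∫ ω, (f0 ω - ∑ j, wstar j * Z j ω) ^ 2 ∂ν
        = ∑ j, ∑ k, S j k * ∫ ω, δf (u ω) j * δf (u ω) k ∂ν := by
      calc ∫ ω, (f0 ω - ∑ j, wstar j * Z j ω) ^ 2 ∂ν
          = ∫ ω, ∑ j, ∑ k, (δf (u ω) j * δf (u ω) k) * (X ω j * X ω k) ∂ν := by
            refine integral_congr_ae (Filter.Eventually.of_forall fun ω => ?_)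
            show (f0 ω - ∑ j, wstar j * Z j ω) ^ 2 = _
            rw [hgδ ω, sq, Finset.sum_mul_sum]
            exact Finset.sum_congr rfl fun j _ => Finset.sum_congr rfl fun k _ => by ring
        _ = ∑ j, ∑ k, ∫ ω, (δf (u ω) j * δf (u ω) k) * (X ω j * X ω k) ∂ν := by
            rw [integral_finset_sum _ fun j _ =>
              integrable_finset_sum _ fun k _ => hδδXXint j k]
            exact Finset.sum_congr rfl fun j _ =>
              integral_finset_sum _ fun k _ => hδδXXint j k
        _ = ∑ j, ∑ k, S j k * ∫ ω, δf (u ω) j * δf (u ω) k ∂ν :=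
            Finset.sum_congr rfl fun j _ => Finset.sum_congr rfl fun k _ => hfact j k
    have hquad : ∀ ω, (δf (u ω)) ⬝ᵥ S *ᵥ (δf (u ω))
        = ∑ j, ∑ k, S j k * (δf (u ω) j * δf (u ω) k) := by
      intro ω
      simp only [dotProduct, Matrix.mulVec]
      refine Finset.sum_congr rfl fun j _ => ?_
      rw [Finset.mul_sum]
      exact Finset.sum_congr rfl fun k _ => by ring
    have hQint2 : ∫ ω, (δf (u ω)) ⬝ᵥ S *ᵥ (δf (u ω)) ∂ν
        = ∑ j, ∑ k, S j k * ∫ ω, δf (u ω) j * δf (u ω) k ∂ν := by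
      calc ∫ ω, (δf (u ω)) ⬝ᵥ S *ᵥ (δf (u ω)) ∂ν
          = ∫ ω, ∑ j, ∑ k, S j k * (δf (u ω) j * δf (u ω) k) ∂ν :=
            integral_congr_ae (Filter.Eventually.of_forall fun ω => hquad ω)
        _ = ∑ j, ∑ k, S j k * ∫ ω, δf (u ω) j * δf (u ω) k ∂ν := by
            rw [integral_finset_sum _ fun j _ =>
              integrable_finset_sum _ fun k _ => (hδδint j k).const_mul (S j k)]
            refine Finset.sum_congr rfl fun j _ => ?_
            rw [integral_finset_sum _ fun k _ => (hδδint j k).const_mul (S j k)]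
            exact Finset.sum_congr rfl fun k _ => integral_const_mul _ _
    have hzero : ∫ ω, (δf (u ω)) ⬝ᵥ S *ᵥ (δf (u ω)) ∂ν = 0 := by
      rw [hQint2, ← hsum1, ← heq]
    have hnonneg : ∀ ω, 0 ≤ (δf (u ω)) ⬝ᵥ S *ᵥ (δf (u ω)) := fun ω => by
      have := hSpd.posSemidef.dotProduct_mulVec_nonneg (δf (u ω)); simpa using this
    have hintq : Integrable (fun ω => (δf (u ω)) ⬝ᵥ S *ᵥ (δf (u ω))) ν := by
      have hfe : (fun ω => (δf (u ω)) ⬝ᵥ S *ᵥ (δf (u ω)))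
          = fun ω => ∑ j, ∑ k, S j k * (δf (u ω) j * δf (u ω) k) := funext hquad
      rw [hfe]
      exact integrable_finset_sum _ fun j _ =>
        integrable_finset_sum _ fun k _ => (hδδint j k).const_mul _
    have hae := (integral_eq_zero_iff_of_nonneg (fun ω => hnonneg ω) hintq).1 hzero
    apply hnotaff (fun j => wstar (Sum.inl j)) (fun j => wstar (Sum.inr j))
    filter_upwards [hae] with ω hω
    intro j
    have hω' : (δf (u ω)) ⬝ᵥ S *ᵥ (δf (u ω)) = 0 := hω
    have hδ0 : δf (u ω) = 0 := by
      by_contra hne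
      have hgt := hSpd.dotProduct_mulVec_pos hne
      simp only [RCLike.star_def, star_trivial] at hgt
      rw [hω'] at hgt
      exact lt_irrefl 0 hgt
    have hcj := congrFun hδ0 j
    simp only [hδdef, Pi.zero_apply] at hcj
    linarith
  have hlow : ∀ ab : (Fin p → ℝ) × (Fin p → ℝ),
      σ2 + Q wstar ≤ ∫ ω, (y ω - ∑ j, ab.1 j * X ω j
        - (∑ j, ab.2 j * X ω j) * u ω) ^ 2 ∂ν := by
    intro ab
    rw [hMSE ab]
    linarith [hQmin (Sum.elim ab.1 ab.2)]
  calc σ2 < σ2 + Q wstar := by linarith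
    _ ≤ _ := le_ciInf hlow
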